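/- Let A be a cyclic Leibniz algebra over ℂ of dimension n with generator a, so {a, a², …, aⁿ} is a basis of A, and write a·aⁿ = α₁a + α₂a² + … + αₙaⁿ with αᵢ ∈ ℂ. Then α₁ = 0. -/

import Mathlib

/-- `lpow μ x k` is the left-normed power `x^(k+1)`; so `lpow μ x 0 = x`,
`lpow μ x 1 = x·x = x²`, `lpow μ x 2 = x·x² = x³`, etc. -/
def lpow {A : Type*} [AddCommGroup A] [Module ℂ A]
    (μ : A →ₗ[ℂ] A →ₗ[ℂ] A) (x : A) : ℕ → A
  | 0 => x
  | n + 1 => μ x (lpow μ x n)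

lemma lpow_mul_eq_zero {A : Type*} [AddCommGroup A] [Module ℂ A]
    (μ : A →ₗ[ℂ] A →ₗ[ℂ] A)
    (hLeib : ∀ x y z : A, μ x (μ y z) = μ (μ x y) z + μ y (μ x z))
    (a : A) : ∀ k z, μ (lpow μ a (k + 1)) z = 0 := by
  intro k
  induction k with
  | zero =>
    intro z
    have h := hLeib a a z
    have : lpow μ a 1 = μ a a := rfl
    rw [this]
    exact right_eq_add.mp h
  | succ k ih =>
    intro z
    have h := hLeib a (lpow μ a (k + 1)) z
    have h1 : μ (lpow μ a (k + 1)) z = 0 := ih z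
    have h2 : μ (lpow μ a (k + 1)) (μ a z) = 0 := ih (μ a z)
    have : lpow μ a (k + 2) = μ a (lpow μ a (k + 1)) := rfl
    rw [this]
    rw [h1, h2, map_zero] at h
    simpa using h.symm

/-- In a cyclic Leibniz algebra over ℂ of dimension n with generator a
(so {a, a², …, aⁿ} is a basis), writing a·aⁿ = α₁a + α₂a² + … + αₙaⁿ, one has α₁ = 0. -/
theorem cyclic_leibniz_first_coeff_zero
    {A : Type*} [AddCommGroup A] [Module ℂ A]
    (μ : A →ₗ[ℂ] A →ₗ[ℂ] A)
    (hLeib : ∀ x y z : A, μ x (μ y z) = μ (μ x y) z + μ y (μ x z))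
    (n : ℕ) (hn : 0 < n) (a : A)
    (b : Module.Basis (Fin n) ℂ A) (hb : ∀ i : Fin n, b i = lpow μ a (i : ℕ))
    (α : Fin n → ℂ)
    (hα : μ a (lpow μ a (n - 1)) = ∑ i : Fin n, α i • lpow μ a (i : ℕ)) :
    α ⟨0, hn⟩ = 0 := by
  obtain ⟨m, rfl⟩ := Nat.exists_eq_succ_of_ne_zero hn.ne'
  have ha' : μ a (lpow μ a m) = ∑ i : Fin (m + 1), α i • lpow μ a (i : ℕ) := hα
  have hpow := lpow_mul_eq_zero μ hLeib a
  -- left side: a^(m+2) · a = 0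
  have h0 : μ (μ a (lpow μ a m)) a = 0 := hpow m a
  rw [ha'] at h0
  have hsum : μ (∑ i : Fin (m + 1), α i • lpow μ a (i : ℕ)) a
      = α 0 • μ a a := by
    simp only [map_sum, LinearMap.sum_apply, map_smul, LinearMap.smul_apply]
    rw [Fin.sum_univ_succ]
    have ht : ∀ j : Fin m, α j.succ • (μ (lpow μ a ((j.succ : ℕ))) a) = 0 := by
      intro j
      have hj : ((j.succ : ℕ)) = (j : ℕ) + 1 := rfl
      rw [hj, hpow, smul_zero]
    rw [Finset.sum_congr rfl (fun j _ => ht j), Finset.sum_const_zero, add_zero]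
    rfl
  rw [hsum] at h0
  have hz : (⟨0, hn⟩ : Fin (m + 1)) = 0 := rfl
  rw [hz]
  rcases Nat.eq_zero_or_pos m with hm | hm
  · subst hm
    -- n = 1 : μ a a = α 0 • a
    have haa : μ a a = α 0 • a := by
      rw [show (μ a a) = μ a (lpow μ a 0) from rfl, hα]
      simp [lpow]
    rw [haa, smul_smul] at h0
    have ha0 : a ≠ 0 := by
      have := b.ne_zero 0
      rwa [hb 0] at this
    have := smul_eq_zero.mp h0
    rcases this with h | h
    · exact pow_eq_zero_iff (n := 2) (by norm_num) |>.mp (by rw [sq]; exact h)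
    · exact absurd h ha0
  · -- n ≥ 2 : μ a a = lpow μ a 1 = b ⟨1,_⟩ ≠ 0
    have h1 : (1 : ℕ) < m + 1 := by omega
    have haa : μ a a = b ⟨1, h1⟩ := by rw [hb ⟨1, h1⟩]; rfl
    rw [haa] at h0
    exact (smul_eq_zero.mp h0).resolve_right (b.ne_zero _)
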